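/- If X has Mellin transform E[X^q] = Γ(q+1)/Γ(αq+1) for all q ≥ 0 with α ∈ (0,1), then X → 1 in probability as α → 1-; i.e., for every ε > 0, there exists δ > 0 such that for all α ∈ (1-δ, 1), P(|X_α - 1| > ε) < ε, where X_α has the above Mellin transform. -/

import Mathlib

open MeasureTheory

/-- If `X α` has Mellin transform `E[(X α)^q] = Γ(q+1)/Γ(αq+1)` for `α ∈ (0,1)`, then
`X α → 1` in probability as `α → 1-`: for every `ε > 0` there is `δ > 0` such that for
all `α ∈ (1-δ, 1)`, `P(|X α - 1| > ε) < ε`. -/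
theorem stmt_18 {Ω : Type*} [MeasurableSpace Ω] (P : Measure Ω) [IsProbabilityMeasure P]
    (X : ℝ → Ω → ℝ) (hXm : ∀ α, Measurable (X α)) (hXnn : ∀ α ω, 0 ≤ X α ω)
    (hX : ∀ α ∈ Set.Ioo (0:ℝ) 1, ∀ q : ℝ, 0 ≤ q →
      ∫ ω, X α ω ^ q ∂P = Real.Gamma (q + 1) / Real.Gamma (α * q + 1)) :
    ∀ ε : ℝ, 0 < ε → ∃ δ : ℝ, 0 < δ ∧ ∀ α : ℝ, 1 - δ < α → α < 1 →
      P {ω | ε < |X α ω - 1|} < ENNReal.ofReal ε := by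
  intro ε hε
  set M : ℝ → ℝ := fun α => 2 / Real.Gamma (2 * α + 1) - 2 / Real.Gamma (α + 1) + 1 with hM
  have hMcont : ContinuousAt M 1 := by
    have h3 : ContinuousAt Real.Gamma 3 := by
      refine (Real.differentiableAt_Gamma ?_).continuousAt
      intro m h
      have : (0:ℝ) ≤ (m:ℝ) := Nat.cast_nonneg m
      linarith
    have h2 : ContinuousAt Real.Gamma 2 := by
      refine (Real.differentiableAt_Gamma ?_).continuousAt
      intro m h
      have : (0:ℝ) ≤ (m:ℝ) := Nat.cast_nonneg m
      linarith
    have c1 : ContinuousAt (fun α : ℝ => Real.Gamma (2 * α + 1)) 1 := by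
      have h3' : ContinuousAt Real.Gamma ((2:ℝ) * 1 + 1) := by norm_num; exact h3
      exact ContinuousAt.comp (g := Real.Gamma) (f := fun α : ℝ => 2 * α + 1) h3' (by fun_prop)
    have c2 : ContinuousAt (fun α : ℝ => Real.Gamma (α + 1)) 1 := by
      have h2' : ContinuousAt Real.Gamma ((1:ℝ) + 1) := by norm_num; exact h2
      exact ContinuousAt.comp (g := Real.Gamma) (f := fun α : ℝ => α + 1) h2' (by fun_prop)
    have g3 : Real.Gamma (2 * (1:ℝ) + 1) ≠ 0 :=
      (Real.Gamma_pos_of_pos (by norm_num)).ne'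
    have g2 : Real.Gamma ((1:ℝ) + 1) ≠ 0 :=
      (Real.Gamma_pos_of_pos (by norm_num)).ne'
    exact ((continuousAt_const.div c1 g3).sub (continuousAt_const.div c2 g2)).add
      continuousAt_const
  have e3 : Real.Gamma (3:ℝ) = 2 := by
    rw [show (3:ℝ) = (2:ℕ) + 1 by norm_num, Real.Gamma_nat_eq_factorial]; norm_num
  have e2 : Real.Gamma (2:ℝ) = 1 := Real.Gamma_two
  have hM1 : M 1 = 0 := by
    simp only [hM]
    rw [show (2:ℝ) * 1 + 1 = 3 by norm_num, show (1:ℝ) + 1 = 2 by norm_num, e3, e2]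
    norm_num
  have hε3 : 0 < ε ^ 3 := by positivity
  obtain ⟨δ, hδ, hδ'⟩ := Metric.continuousAt_iff.mp hMcont (ε ^ 3) hε3
  refine ⟨min δ 1, lt_min hδ one_pos, fun α hα1 hα2 => ?_⟩
  have hα0 : 0 < α := by
    have h1 : min δ 1 ≤ 1 := min_le_right _ _
    linarith
  have hαmem : α ∈ Set.Ioo (0:ℝ) 1 := ⟨hα0, hα2⟩
  have hMα : M α < ε ^ 3 := by
    have hd : dist α 1 < δ := by
      rw [Real.dist_eq, abs_lt]
      have h1 : min δ 1 ≤ δ := min_le_left _ _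
      constructor <;> linarith
    have := hδ' hd
    rw [Real.dist_eq, hM1, sub_zero] at this
    exact lt_of_le_of_lt (le_abs_self _) this
  -- second moment
  have hg2α : 0 < Real.Gamma (2 * α + 1) := Real.Gamma_pos_of_pos (by linarith)
  have hgα : 0 < Real.Gamma (α + 1) := Real.Gamma_pos_of_pos (by linarith)
  have hmom2 : ∫ ω, X α ω ^ (2:ℕ) ∂P = 2 / Real.Gamma (2 * α + 1) := by
    have h := hX α hαmem 2 (by norm_num)
    simp_rw [Real.rpow_two] at h
    rw [h, show (2:ℝ) + 1 = 3 by norm_num, e3, show α * 2 = 2 * α by ring]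
  have hmom1 : ∫ ω, X α ω ∂P = 1 / Real.Gamma (α + 1) := by
    have h := hX α hαmem 1 (by norm_num)
    simp_rw [Real.rpow_one] at h
    rw [h, show (1:ℝ) + 1 = 2 by norm_num, e2, mul_one]
  have int2 : Integrable (fun ω => X α ω ^ (2:ℕ)) P := by
    by_contra hc
    rw [integral_undef hc] at hmom2
    have : (0:ℝ) < 2 / Real.Gamma (2 * α + 1) := by positivity
    linarith
  have int1 : Integrable (X α) P := by
    by_contra hc
    rw [integral_undef hc] at hmom1
    have : (0:ℝ) < 1 / Real.Gamma (α + 1) := by positivity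
    linarith
  have intsq : Integrable (fun ω => (X α ω - 1) ^ 2) P := by
    have e : (fun ω => (X α ω - 1) ^ 2) = fun ω => X α ω ^ (2:ℕ) - 2 * X α ω + 1 := by
      funext ω; ring
    rw [e]
    exact (int2.sub (int1.const_mul 2)).add (integrable_const 1)
  have hint : ∫ ω, (X α ω - 1) ^ 2 ∂P = M α := by
    have e : (fun ω => (X α ω - 1) ^ 2) = fun ω => X α ω ^ (2:ℕ) - 2 * X α ω + 1 := by
      funext ω; ring
    have isub : Integrable (fun ω => X α ω ^ (2:ℕ) - 2 * X α ω) P :=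
      int2.sub (int1.const_mul 2)
    rw [e, integral_add isub (integrable_const 1),
      integral_sub int2 (int1.const_mul 2), integral_const_mul 2, hmom2, hmom1,
      integral_const]
    simp [hM]
    ring
  -- Markov
  have markov := mul_meas_ge_le_integral_of_nonneg
    (f := fun ω => (X α ω - 1) ^ 2) (Filter.Eventually.of_forall fun ω => sq_nonneg _)
    intsq (ε ^ 2)
  rw [hint] at markov
  have hsub : {ω | ε < |X α ω - 1|} ⊆ {ω | ε ^ 2 ≤ (X α ω - 1) ^ 2} := by
    intro ω hω
    simp only [Set.mem_setOf_eq] at *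
    calc ε ^ 2 ≤ |X α ω - 1| ^ 2 := pow_le_pow_left₀ hε.le hω.le 2
      _ = (X α ω - 1) ^ 2 := sq_abs _
  refine lt_of_le_of_lt (measure_mono hsub) ?_
  rw [ENNReal.lt_ofReal_iff_toReal_lt (measure_ne_top P _)]
  have hε2 : 0 < ε ^ 2 := by positivity
  rw [measureReal_def] at markov
  nlinarith [markov, hMα, (P {ω | ε ^ 2 ≤ (X α ω - 1) ^ 2}).toReal]
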